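/- Let λ be a real number and x a nonzero real number. For every integer k ≥ 0, the trace of the (k+1)-st power of the 2×2 matrix product [[1, 0], [λ/x, 1]] · [[0, x], [−1/x, 0]] equals T_{k+1}(λ), the (k+1)-st normalized Chebyshev polynomial of the first kind evaluated at λ. -/
import Mathlib


/-- Normalized Chebyshev polynomials of the first kind:
`T_0(x) = 2`, `T_1(x) = x`, `T_ℓ(x) = x·T_{ℓ-1}(x) - T_{ℓ-2}(x)` for `ℓ ≥ 2`. -/
noncomputable def chebT (x : ℝ) : ℕ → ℝ
  | 0 => 2
  | 1 => x
  | (n + 2) => x * chebT x (n + 1) - chebT x n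

/-- For `λ ∈ ℝ`, `x ≠ 0`, and `k ≥ 0`,
`tr(([[1,0],[λ/x,1]]·[[0,x],[-1/x,0]])^(k+1)) = T_{k+1}(λ)`. -/
theorem trace_power_eq_chebT (lam x : ℝ) (hx : x ≠ 0) (k : ℕ) :
    ((!![(1 : ℝ), 0; lam / x, 1] * !![(0 : ℝ), x; -1 / x, 0]) ^ (k + 1)).trace =
      chebT lam (k + 1) := by
  set M : Matrix (Fin 2) (Fin 2) ℝ := !![(1 : ℝ), 0; lam / x, 1] * !![(0 : ℝ), x; -1 / x, 0]
    with hMdef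
  have hM : M = !![(0 : ℝ), x; -1 / x, lam] := by
    rw [hMdef]
    ext i j
    fin_cases i <;> fin_cases j <;>
      simp [Matrix.mul_apply, Fin.sum_univ_two] <;> field_simp
  have hM2 : M ^ 2 = lam • M - 1 := by
    rw [hM, pow_two]
    ext i j
    fin_cases i <;> fin_cases j <;>
      simp [Matrix.mul_apply, Fin.sum_univ_two, Matrix.one_apply] <;> (try field_simp) <;> ring
  have key : ∀ n : ℕ, (M ^ (n + 1)).trace = chebT lam (n + 1) ∧
      (M ^ (n + 2)).trace = chebT lam (n + 2) := by
    intro n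
    induction n with
    | zero =>
      constructor
      · simp [hM, Matrix.trace_fin_two, chebT]
      · rw [hM2]
        rw [show chebT lam 2 = lam * chebT lam 1 - chebT lam 0 from rfl]
        simp [Matrix.trace_sub, Matrix.trace_smul, hM, Matrix.trace_fin_two, chebT]

    | succ m ih =>
      refine ⟨ih.2, ?_⟩
      have : M ^ (m + 3) = M ^ (m + 1) * M ^ 2 := by rw [← pow_add]
      rw [this, hM2, mul_sub, mul_one, Matrix.mul_smul, Matrix.trace_sub, Matrix.trace_smul,
        ← pow_succ]
      rw [show chebT lam (m + 3) = lam * chebT lam (m + 2) - chebT lam (m + 1) from rfl]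
      rw [ih.1, ih.2]
      simp [smul_eq_mul]
  exact (key k).1
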